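/- (Convex case, sublinear rate of the averaged iterates.) Assume f is convex, differentiable, and ∇f is L-Lipschitz on ℝⁿ. Let c ∈ [0, 1/8], 0 < λ̲ ≤ λ_max, B₂ > 0, and let x* be a minimizer of F = f + h over ℝⁿ. Suppose sequences x^i, g^i ∈ ℝⁿ, λ_i ∈ [λ̲, λ_max], fᵢ, fᵢ⁺ ∈ ℝ, and η_i^g, η_i^f ≥ 0 satisfy for all i ≥ 0: x^{i+1} = prox_{λ_i h}(x^i − λ_i g^i); ‖g^i − ∇f(x^i)‖ ≤ η_i^g; |fᵢ − f(x^i)| ≤ η_i^f + (c/λ_i)‖x^{i+1} − x^i‖² and |fᵢ⁺ − f(x^{i+1})| ≤ η_i^f + (c/λ_i)‖x^{i+1} − x^i‖²; the line-search condition fᵢ⁺ ≤ fᵢ + ⟨g^i, x^{i+1} − x^i⟩ + (1/(2λ_i))‖x^{i+1} − x^i‖² + ν_i holds with ν_i = (1/2)(η_i^g)² + 2η_i^f; Σ_{i=0}^∞ η_i^g < ∞ and Σ_{i=0}^∞ η_i^f < ∞; and ‖x^i − x*‖ ≤ B₂ for all i. Then there exists a constant Υ < ∞, independent of N, such that the averaged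 iterates x̄^N = (N+1)⁻¹ Σ_{i=0}^N x^i satisfy F(x̄^N) − F(x*) ≤ Υ/(N+1) for all N ≥ 0. -/

import Mathlib

open RealInnerProductSpace

section AuxLemmas

lemma aux_norm {E : Type*} [NormedAddCommGroup E] [InnerProductSpace ℝ E]
    (a b : E) (t : ℝ) :
    ‖a + t • b‖ ^ 2 = ‖a‖ ^ 2 + 2 * t * ⟪a, b⟫ + t ^ 2 * ‖b‖ ^ 2 := by
  rw [@norm_add_sq_real, real_inner_smul_right, norm_smul, Real.norm_eq_abs, mul_pow, sq_abs]
  ring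

lemma aux_tp {E : Type*} [NormedAddCommGroup E] [InnerProductSpace ℝ E]
    {h : E → ℝ} (hconv : ConvexOn ℝ Set.univ h) {lam : ℝ} (hlam : 0 < lam)
    (u p : E)
    (hmin : ∀ y, ‖p - u‖ ^ 2 + 2 * lam * h p ≤ ‖y - u‖ ^ 2 + 2 * lam * h y) (y : E) :
    ‖p - u‖ ^ 2 + 2 * lam * h p + ‖y - p‖ ^ 2 ≤ ‖y - u‖ ^ 2 + 2 * lam * h y := by
  set Q := ‖y - p‖ ^ 2 with hQdef
  have hQ0 : 0 ≤ Q := by positivity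
  have hn2 : ‖y - u‖ ^ 2 = ‖p - u‖ ^ 2 + 2 * ⟪p - u, y - p⟫ + Q := by
    have e : y - u = (p - u) + (1 : ℝ) • (y - p) := by module
    rw [hQdef, e, aux_norm]; ring
  have key : ∀ t : ℝ, 0 < t → t ≤ 1 →
      2 * lam * h p - 2 * lam * h y - 2 * ⟪p - u, y - p⟫ ≤ t * Q := by
    intro t ht0 ht1
    have hz := hmin ((1 - t) • p + t • y)
    have hh := hconv.2 (Set.mem_univ p) (Set.mem_univ y) (by linarith : (0:ℝ) ≤ 1 - t) ht0.le
      (by ring)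
    have hn1 : ‖((1 - t) • p + t • y) - u‖ ^ 2
        = ‖p - u‖ ^ 2 + 2 * t * ⟪p - u, y - p⟫ + t ^ 2 * Q := by
      have e : ((1 - t) • p + t • y) - u = (p - u) + t • (y - p) := by module
      rw [hQdef, e, aux_norm]
    rw [hn1] at hz
    simp only [smul_eq_mul] at hh
    have hhl := mul_le_mul_of_nonneg_left hh (by linarith : (0:ℝ) ≤ 2 * lam)
    have hX : t * (2 * lam * h p - 2 * lam * h y - 2 * ⟪p - u, y - p⟫ - t * Q) ≤ t * 0 := by
      nlinarith [hz, hhl]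
    have := le_of_mul_le_mul_left hX ht0
    linarith
  by_contra hcon
  push_neg at hcon
  set ε := (‖p - u‖ ^ 2 + 2 * lam * h p + Q) - (‖y - u‖ ^ 2 + 2 * lam * h y) with hεdef
  have hε0 : 0 < ε := by rw [hεdef]; linarith
  have hεQ : ε = 2 * lam * h p - 2 * lam * h y - 2 * ⟪p - u, y - p⟫ := by
    rw [hεdef, hn2]; ring
  have hD : 0 < ε + Q + 1 := by linarith
  have ht0 : 0 < ε / (ε + Q + 1) := div_pos hε0 hD
  have ht1 : ε / (ε + Q + 1) ≤ 1 := by rw [div_le_one hD]; linarith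
  have hk := key _ ht0 ht1
  rw [← hεQ] at hk
  have hlt : (ε / (ε + Q + 1)) * Q < ε := by
    rw [div_mul_eq_mul_div, div_lt_iff₀ hD]
    nlinarith
  linarith

lemma aux_grad {E : Type*} [NormedAddCommGroup E] [InnerProductSpace ℝ E] [CompleteSpace E]
    {f : E → ℝ} (hconv : ConvexOn ℝ Set.univ f) (hf : Differentiable ℝ f) (x y : E) :
    f x + ⟪gradient f x, y - x⟫ ≤ f y := by
  set d := y - x with hd
  have hline : HasDerivAt (fun t : ℝ => x + t • d) d 0 := by
    simpa using ((hasDerivAt_id (0 : ℝ)).smul_const d).const_add x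
  have hφ : HasDerivAt (fun t : ℝ => f (x + t • d)) (fderiv ℝ f x d) 0 := by
    have h1 : HasFDerivAt f (fderiv ℝ f x) (x + (0 : ℝ) • d) := by
      simpa using (hf x).hasFDerivAt
    exact h1.comp_hasDerivAt 0 hline
  have hslope := hasDerivAt_iff_tendsto_slope.mp hφ
  have hmono : nhdsWithin (0 : ℝ) (Set.Ioi 0) ≤ nhdsWithin (0 : ℝ) {(0 : ℝ)}ᶜ :=
    nhdsWithin_mono _ (fun t ht => ne_of_gt ht)
  have hkey : fderiv ℝ f x d ≤ f y - f x := by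
    refine le_of_tendsto (hslope.mono_left hmono) ?_
    filter_upwards [Ioo_mem_nhdsGT_of_mem (Set.left_mem_Ico.mpr one_pos)] with t ht
    have hc := hconv.2 (Set.mem_univ x) (Set.mem_univ y)
      (by linarith [ht.2] : (0:ℝ) ≤ 1 - t) ht.1.le (by ring)
    have hxt : (1 - t) • x + t • y = x + t • d := by rw [hd]; module
    rw [hxt] at hc
    simp only [smul_eq_mul] at hc
    have hs : slope (fun t : ℝ => f (x + t • d)) 0 t = (f (x + t • d) - f x) / t := by
      rw [slope_def_field]; simp
    rw [hs, div_le_iff₀ ht.1]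
    nlinarith [hc]
  have hg : ⟪gradient f x, d⟫ = fderiv ℝ f x d := by
    have hgr : gradient f x = (InnerProductSpace.toDual ℝ E).symm (fderiv ℝ f x) := rfl
    rw [hgr, InnerProductSpace.toDual_symm_apply]
  rw [hg]
  linarith

end AuxLemmas

set_option maxHeartbeats 1000000 in
/-- convex case, sublinear `O(1/N)` rate of the averaged iterates of the
adaptive proximal inexact gradient method. -/
theorem stmt11 {n : ℕ}
    (f h : EuclideanSpace ℝ (Fin n) → ℝ)
    (hconv : ConvexOn ℝ Set.univ h)
    (hfconv : ConvexOn ℝ Set.univ f)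
    (hf : Differentiable ℝ f)
    (L : ℝ) (hL : 0 < L)
    (hlip : ∀ u v : EuclideanSpace ℝ (Fin n),
      ‖gradient f u - gradient f v‖ ≤ L * ‖u - v‖)
    (prox : ℝ → EuclideanSpace ℝ (Fin n) → EuclideanSpace ℝ (Fin n))
    (hprox : ∀ lam : ℝ, 0 < lam → ∀ u y : EuclideanSpace ℝ (Fin n),
      1 / (2 * lam) * ‖prox lam u - u‖ ^ 2 + h (prox lam u)
        ≤ 1 / (2 * lam) * ‖y - u‖ ^ 2 + h y)
    (c lamLow lamMax B2 : ℝ)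
    (hc0 : 0 ≤ c) (hc1 : c ≤ 1 / 8)
    (hlamLow : 0 < lamLow) (hord : lamLow ≤ lamMax) (hB2 : 0 < B2)
    (F : EuclideanSpace ℝ (Fin n) → ℝ) (hF : ∀ y, F y = f y + h y)
    (xstar : EuclideanSpace ℝ (Fin n)) (hxstar : ∀ y, F xstar ≤ F y)
    (x g : ℕ → EuclideanSpace ℝ (Fin n))
    (lam ηg ηf : ℕ → ℝ) (fi fip : ℕ → ℝ)
    (hlam : ∀ i, lam i ∈ Set.Icc lamLow lamMax)
    (hηg : ∀ i, 0 ≤ ηg i) (hηf : ∀ i, 0 ≤ ηf i)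
    (hupd : ∀ i, x (i + 1) = prox (lam i) (x i - lam i • g i))
    (hgrad : ∀ i, ‖g i - gradient f (x i)‖ ≤ ηg i)
    (hfi : ∀ i, |fi i - f (x i)| ≤ ηf i + c / lam i * ‖x (i + 1) - x i‖ ^ 2)
    (hfip : ∀ i, |fip i - f (x (i + 1))| ≤ ηf i + c / lam i * ‖x (i + 1) - x i‖ ^ 2)
    (hls : ∀ i, fip i ≤ fi i + ⟪g i, x (i + 1) - x i⟫
      + 1 / (2 * lam i) * ‖x (i + 1) - x i‖ ^ 2
      + (1 / 2 * (ηg i) ^ 2 + 2 * ηf i))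
    (hsumg : Summable ηg) (hsumf : Summable ηf)
    (hbd : ∀ i, ‖x i - xstar‖ ≤ B2) :
    ∃ Ups : ℝ, ∀ N : ℕ,
      F (((N : ℝ) + 1)⁻¹ • ∑ i ∈ Finset.range (N + 1), x i) - F xstar
        ≤ Ups / ((N : ℝ) + 1) := by
  simp only [hF] at hxstar ⊢
  have hL0 : ∀ i, 0 < lam i := fun i => lt_of_lt_of_le hlamLow (hlam i).1
  have hLmax : ∀ i, lam i ≤ lamMax := fun i => (hlam i).2
  have hlamMax0 : 0 < lamMax := lt_of_lt_of_le hlamLow hord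
  have hQ0 : ∀ i : ℕ, (0:ℝ) ≤ ‖x (i+1) - x i‖ ^ 2 := fun i => by positivity
  -- multiplied prox inequality
  have hproxM : ∀ i : ℕ, ∀ y, ‖x (i+1) - (x i - lam i • g i)‖ ^ 2 + 2 * lam i * h (x (i+1))
      ≤ ‖y - (x i - lam i • g i)‖ ^ 2 + 2 * lam i * h y := by
    intro i y
    have hLi := hL0 i
    have hne : lam i ≠ 0 := ne_of_gt hLi
    have e : ∀ r : ℝ, 2 * lam i * (1 / (2 * lam i) * r) = r := fun r => by field_simp
    have h2 := mul_le_mul_of_nonneg_left (hprox (lam i) hLi (x i - lam i • g i) y)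
      (by positivity : (0:ℝ) ≤ 2 * lam i)
    rw [hupd i]
    calc ‖prox (lam i) (x i - lam i • g i) - (x i - lam i • g i)‖ ^ 2
          + 2 * lam i * h (prox (lam i) (x i - lam i • g i))
        = 2 * lam i * (1 / (2 * lam i) * ‖prox (lam i) (x i - lam i • g i)
            - (x i - lam i • g i)‖ ^ 2 + h (prox (lam i) (x i - lam i • g i))) := by
          rw [mul_add, e]
      _ ≤ 2 * lam i * (1 / (2 * lam i) * ‖y - (x i - lam i • g i)‖ ^ 2 + h y) := h2
      _ = ‖y - (x i - lam i • g i)‖ ^ 2 + 2 * lam i * h y := by rw [mul_add, e]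
  have tpM : ∀ i : ℕ, ∀ y, ‖x (i+1) - (x i - lam i • g i)‖ ^ 2 + 2 * lam i * h (x (i+1))
      + ‖y - x (i+1)‖ ^ 2
      ≤ ‖y - (x i - lam i • g i)‖ ^ 2 + 2 * lam i * h y :=
    fun i y => aux_tp hconv (hL0 i) (x i - lam i • g i) (x (i+1)) (hproxM i) y
  -- inexact descent-type bound on f
  have hfa : ∀ i : ℕ, f (x (i+1)) ≤ f (x i) + ⟪g i, x (i+1) - x i⟫
      + 1 / (2 * lam i) * ‖x (i+1) - x i‖ ^ 2
      + 1 / 2 * (ηg i) ^ 2 + 4 * ηf i + 2 * (c / lam i * ‖x (i+1) - x i‖ ^ 2) := by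
    intro i
    have h1 := (abs_le.mp (hfi i)).2
    have h2 := (abs_le.mp (hfip i)).1
    have h3 := hls i
    linarith
  have n1 : ∀ i : ℕ, ‖x (i+1) - (x i - lam i • g i)‖ ^ 2
      = ‖x (i+1) - x i‖ ^ 2 + 2 * lam i * ⟪x (i+1) - x i, g i⟫ + (lam i) ^ 2 * ‖g i‖ ^ 2 := by
    intro i
    rw [show x (i+1) - (x i - lam i • g i) = (x (i+1) - x i) + lam i • g i by module, aux_norm]
  -- per-iteration sufficient decrease
  have descent : ∀ i : ℕ, ‖x (i+1) - x i‖ ^ 2 ≤ 4 * lamMax *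
      ((f (x i) + h (x i)) - (f (x (i+1)) + h (x (i+1))) + (1/2 * (ηg i)^2 + 4 * ηf i)) := by
    intro i
    have hLi := hL0 i
    have hne : lam i ≠ 0 := ne_of_gt hLi
    have htp := tpM i (x i)
    have n2 : ‖x i - (x i - lam i • g i)‖ ^ 2 = (lam i) ^ 2 * ‖g i‖ ^ 2 := by
      rw [show x i - (x i - lam i • g i) = lam i • g i by module, norm_smul,
        Real.norm_eq_abs, mul_pow, sq_abs]
    have n3 : ‖x i - x (i+1)‖ ^ 2 = ‖x (i+1) - x i‖ ^ 2 := by rw [norm_sub_rev]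
    rw [n1 i, n2, n3] at htp
    have hfb := mul_le_mul_of_nonneg_left (hfa i) (by positivity : (0:ℝ) ≤ 2 * lam i)
    have eS : 2 * lam i * (1 / (2 * lam i) * ‖x (i+1) - x i‖ ^ 2) = ‖x (i+1) - x i‖ ^ 2 := by
      field_simp
    have eC : 2 * lam i * (c / lam i * ‖x (i+1) - x i‖ ^ 2) = 2 * c * ‖x (i+1) - x i‖ ^ 2 := by
      field_simp
    have hIc : 2 * lam i * ⟪g i, x (i+1) - x i⟫ = 2 * lam i * ⟪x (i+1) - x i, g i⟫ := by
      rw [real_inner_comm]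
    have hmid : (1 - 4 * c) * ‖x (i+1) - x i‖ ^ 2 ≤ 2 * lam i *
        ((f (x i) + h (x i)) - (f (x (i+1)) + h (x (i+1))) + (1/2 * (ηg i)^2 + 4 * ηf i)) := by
      linarith [htp, hfb, eS, eC, hIc]
    have hR0 : 0 ≤ (f (x i) + h (x i)) - (f (x (i+1)) + h (x (i+1)))
        + (1/2 * (ηg i)^2 + 4 * ηf i) := by
      by_contra hcon
      push_neg at hcon
      have hneg : 2 * lam i * ((f (x i) + h (x i)) - (f (x (i+1)) + h (x (i+1)))
          + (1/2 * (ηg i)^2 + 4 * ηf i)) < 0 :=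
        mul_neg_of_pos_of_neg (by linarith) hcon
      nlinarith [mul_nonneg (by linarith : (0:ℝ) ≤ 1 - 4 * c) (hQ0 i)]
    have h4 : 2 * lam i * ((f (x i) + h (x i)) - (f (x (i+1)) + h (x (i+1)))
          + (1/2 * (ηg i)^2 + 4 * ηf i))
        ≤ 2 * lamMax * ((f (x i) + h (x i)) - (f (x (i+1)) + h (x (i+1)))
          + (1/2 * (ηg i)^2 + 4 * ηf i)) :=
      mul_le_mul_of_nonneg_right (by linarith [hLmax i]) hR0
    linarith [hmid, h4, mul_nonneg (by linarith : (0:ℝ) ≤ 1/8 - c) (hQ0 i)]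
  -- per-iteration bound relative to the minimizer
  have star : ∀ i : ℕ, lam i * ((f (x (i+1)) + h (x (i+1))) - (f xstar + h xstar))
      ≤ lamMax * (B2 * ηg i + (1/2 * (ηg i)^2 + 4 * ηf i)) + 2 * c * ‖x (i+1) - x i‖ ^ 2
        + 1/2 * (‖x i - xstar‖ ^ 2 - ‖x (i+1) - xstar‖ ^ 2) := by
    intro i
    have hLi := hL0 i
    have hne : lam i ≠ 0 := ne_of_gt hLi
    have htp := tpM i xstar
    have n4 : ‖xstar - (x i - lam i • g i)‖ ^ 2
        = ‖x i - xstar‖ ^ 2 + 2 * lam i * ⟪xstar - x i, g i⟫ + (lam i) ^ 2 * ‖g i‖ ^ 2 := by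
      rw [show xstar - (x i - lam i • g i) = (xstar - x i) + lam i • g i by module, aux_norm,
        norm_sub_rev xstar (x i)]
    have n5 : ‖xstar - x (i+1)‖ ^ 2 = ‖x (i+1) - xstar‖ ^ 2 := by rw [norm_sub_rev]
    rw [n1 i, n4, n5] at htp
    have hfb := mul_le_mul_of_nonneg_left (hfa i) (by positivity : (0:ℝ) ≤ 2 * lam i)
    have eS : 2 * lam i * (1 / (2 * lam i) * ‖x (i+1) - x i‖ ^ 2) = ‖x (i+1) - x i‖ ^ 2 := by
      field_simp
    have eC : 2 * lam i * (c / lam i * ‖x (i+1) - x i‖ ^ 2) = 2 * c * ‖x (i+1) - x i‖ ^ 2 := by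
      field_simp
    have hIc : 2 * lam i * ⟪g i, x (i+1) - x i⟫ = 2 * lam i * ⟪x (i+1) - x i, g i⟫ := by
      rw [real_inner_comm]
    have hgb := mul_le_mul_of_nonneg_left (aux_grad hfconv hf (x i) xstar)
      (by positivity : (0:ℝ) ≤ 2 * lam i)
    have hJK : ⟪xstar - x i, g i⟫ - ⟪gradient f (x i), xstar - x i⟫ ≤ ηg i * B2 := by
      have h1 : ⟪xstar - x i, g i⟫ - ⟪gradient f (x i), xstar - x i⟫
          = ⟪g i - gradient f (x i), xstar - x i⟫ := by
        rw [real_inner_comm (g i) (xstar - x i), inner_sub_left]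
      rw [h1]
      calc ⟪g i - gradient f (x i), xstar - x i⟫
          ≤ ‖g i - gradient f (x i)‖ * ‖xstar - x i‖ := real_inner_le_norm _ _
        _ ≤ ηg i * B2 := by
            have hb : ‖xstar - x i‖ ≤ B2 := by rw [norm_sub_rev]; exact hbd i
            exact mul_le_mul (hgrad i) hb (norm_nonneg _) (hηg i)
    have hJKb := mul_le_mul_of_nonneg_left hJK (by positivity : (0:ℝ) ≤ 2 * lam i)
    have hLM : 2 * lam i * (ηg i * B2) ≤ 2 * lamMax * (ηg i * B2) :=
      mul_le_mul_of_nonneg_right (by linarith [hLmax i]) (mul_nonneg (hηg i) hB2.le)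
    have hLE : 2 * lam i * (1/2 * (ηg i)^2 + 4 * ηf i)
        ≤ 2 * lamMax * (1/2 * (ηg i)^2 + 4 * ηf i) :=
      mul_le_mul_of_nonneg_right (by linarith [hLmax i])
        (by nlinarith [sq_nonneg (ηg i), hηf i])
    linarith [htp, hfb, hgb, hJKb, hLM, hLE, eS, eC, hIc]
  -- summability bounds
  set G := ∑' i, ηg i with hGdef
  set Hf := ∑' i, ηf i with hHdef
  have hG0 : 0 ≤ G := tsum_nonneg hηg
  have hsumηgN : ∀ N, ∑ i ∈ Finset.range N, ηg i ≤ G :=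
    fun N => Summable.sum_le_tsum _ (fun i _ => hηg i) hsumg
  have hsumηfN : ∀ N, ∑ i ∈ Finset.range N, ηf i ≤ Hf :=
    fun N => Summable.sum_le_tsum _ (fun i _ => hηf i) hsumf
  have hηgle : ∀ i, ηg i ≤ G := fun i => Summable.le_tsum hsumg i (fun j _ => hηg j)
  set Emax := 1/2 * G * G + 4 * Hf with hEdef
  have hsumεN : ∀ N, ∑ i ∈ Finset.range N, (1/2 * (ηg i)^2 + 4 * ηf i) ≤ Emax := by
    intro N
    have h1 : ∑ i ∈ Finset.range N, (ηg i)^2 ≤ G * G := by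
      calc ∑ i ∈ Finset.range N, (ηg i)^2 ≤ ∑ i ∈ Finset.range N, G * ηg i :=
          Finset.sum_le_sum (fun i _ => by nlinarith [hηg i, hηgle i])
        _ = G * ∑ i ∈ Finset.range N, ηg i := by rw [Finset.mul_sum]
        _ ≤ G * G := mul_le_mul_of_nonneg_left (hsumηgN N) hG0
    have h2 := hsumηfN N
    have h3 : ∑ i ∈ Finset.range N, (1/2 * (ηg i)^2 + 4 * ηf i)
        = 1/2 * (∑ i ∈ Finset.range N, (ηg i)^2) + 4 * (∑ i ∈ Finset.range N, ηf i) := by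
      rw [Finset.sum_add_distrib, Finset.mul_sum, Finset.mul_sum]
    rw [h3, hEdef]
    linarith
  set D := (f (x 0) + h (x 0)) - (f xstar + h xstar) with hDdef
  have hD0 : 0 ≤ D := by have := hxstar (x 0); rw [hDdef]; linarith
  -- total squared-step bound
  have hQsum : ∀ N, ∑ i ∈ Finset.range N, ‖x (i+1) - x i‖ ^ 2 ≤ 4 * lamMax * (D + Emax) := by
    intro N
    have h1 : ∑ i ∈ Finset.range N, ‖x (i+1) - x i‖ ^ 2
        ≤ ∑ i ∈ Finset.range N, (4 * lamMax * ((f (x i) + h (x i))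
          - (f (x (i+1)) + h (x (i+1))) + (1/2 * (ηg i)^2 + 4 * ηf i))) :=
      Finset.sum_le_sum (fun i _ => descent i)
    have h2 : ∑ i ∈ Finset.range N, (4 * lamMax * ((f (x i) + h (x i))
          - (f (x (i+1)) + h (x (i+1))) + (1/2 * (ηg i)^2 + 4 * ηf i)))
        = 4 * lamMax * (((f (x 0) + h (x 0)) - (f (x N) + h (x N)))
          + ∑ i ∈ Finset.range N, (1/2 * (ηg i)^2 + 4 * ηf i)) := by
      rw [← Finset.mul_sum, Finset.sum_add_distrib,
        Finset.sum_range_sub' (fun i => f (x i) + h (x i))]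
    have h3 : ((f (x 0) + h (x 0)) - (f (x N) + h (x N)))
        + ∑ i ∈ Finset.range N, (1/2 * (ηg i)^2 + 4 * ηf i) ≤ D + Emax := by
      have h4 := hxstar (x N)
      have h5 := hsumεN N
      rw [hDdef]
      linarith
    calc ∑ i ∈ Finset.range N, ‖x (i+1) - x i‖ ^ 2
        ≤ 4 * lamMax * (((f (x 0) + h (x 0)) - (f (x N) + h (x N)))
          + ∑ i ∈ Finset.range N, (1/2 * (ηg i)^2 + 4 * ηf i)) := by rw [← h2]; exact h1
      _ ≤ 4 * lamMax * (D + Emax) :=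
          mul_le_mul_of_nonneg_left h3 (by linarith)
  -- main telescoping bound
  set C1 := lamMax * (B2 * G + Emax) + 2 * c * (4 * lamMax * (D + Emax)) + 1/2 * B2^2 with hC1def
  have hmain : ∀ N, ∑ i ∈ Finset.range N,
      ((f (x (i+1)) + h (x (i+1))) - (f xstar + h xstar)) ≤ C1 / lamLow := by
    intro N
    have h0 : ∀ i : ℕ, 0 ≤ (f (x (i+1)) + h (x (i+1))) - (f xstar + h xstar) :=
      fun i => by have := hxstar (x (i+1)); linarith
    have h1 : lamLow * ∑ i ∈ Finset.range N,
        ((f (x (i+1)) + h (x (i+1))) - (f xstar + h xstar))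
        ≤ ∑ i ∈ Finset.range N, lam i * ((f (x (i+1)) + h (x (i+1))) - (f xstar + h xstar)) := by
      rw [Finset.mul_sum]
      exact Finset.sum_le_sum (fun i _ => mul_le_mul_of_nonneg_right (hlam i).1 (h0 i))
    have h2 : ∑ i ∈ Finset.range N, lam i * ((f (x (i+1)) + h (x (i+1))) - (f xstar + h xstar))
        ≤ ∑ i ∈ Finset.range N, (lamMax * (B2 * ηg i + (1/2 * (ηg i)^2 + 4 * ηf i))
          + 2 * c * ‖x (i+1) - x i‖ ^ 2
          + 1/2 * (‖x i - xstar‖ ^ 2 - ‖x (i+1) - xstar‖ ^ 2)) :=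
      Finset.sum_le_sum (fun i _ => star i)
    have hSa : ∑ i ∈ Finset.range N, lamMax * (B2 * ηg i + (1/2 * (ηg i)^2 + 4 * ηf i))
        ≤ lamMax * (B2 * G + Emax) := by
      rw [← Finset.mul_sum]
      refine mul_le_mul_of_nonneg_left ?_ hlamMax0.le
      have e1 : ∑ i ∈ Finset.range N, (B2 * ηg i + (1/2 * (ηg i)^2 + 4 * ηf i))
          = B2 * (∑ i ∈ Finset.range N, ηg i)
            + ∑ i ∈ Finset.range N, (1/2 * (ηg i)^2 + 4 * ηf i) := by
        rw [Finset.sum_add_distrib, Finset.mul_sum]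
      rw [e1]
      have := hsumεN N
      have h6 := mul_le_mul_of_nonneg_left (hsumηgN N) hB2.le
      linarith
    have hSb : ∑ i ∈ Finset.range N, 2 * c * ‖x (i+1) - x i‖ ^ 2
        ≤ 2 * c * (4 * lamMax * (D + Emax)) := by
      rw [← Finset.mul_sum]
      exact mul_le_mul_of_nonneg_left (hQsum N) (by linarith)
    have hSc : ∑ i ∈ Finset.range N, 1/2 * (‖x i - xstar‖ ^ 2 - ‖x (i+1) - xstar‖ ^ 2)
        ≤ 1/2 * B2^2 := by
      rw [← Finset.mul_sum, Finset.sum_range_sub' (fun i => ‖x i - xstar‖ ^ 2)]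
      have h5 : ‖x 0 - xstar‖ ^ 2 ≤ B2 ^ 2 := by
        nlinarith [hbd 0, norm_nonneg (x 0 - xstar)]
      have h6 : (0:ℝ) ≤ ‖x N - xstar‖ ^ 2 := by positivity
      linarith
    have h7 : ∑ i ∈ Finset.range N, (lamMax * (B2 * ηg i + (1/2 * (ηg i)^2 + 4 * ηf i))
          + 2 * c * ‖x (i+1) - x i‖ ^ 2
          + 1/2 * (‖x i - xstar‖ ^ 2 - ‖x (i+1) - xstar‖ ^ 2))
        = (∑ i ∈ Finset.range N, lamMax * (B2 * ηg i + (1/2 * (ηg i)^2 + 4 * ηf i)))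
          + (∑ i ∈ Finset.range N, 2 * c * ‖x (i+1) - x i‖ ^ 2)
          + (∑ i ∈ Finset.range N, 1/2 * (‖x i - xstar‖ ^ 2 - ‖x (i+1) - xstar‖ ^ 2)) := by
      rw [Finset.sum_add_distrib, Finset.sum_add_distrib]
    rw [le_div_iff₀ hlamLow]
    calc (∑ i ∈ Finset.range N, ((f (x (i+1)) + h (x (i+1))) - (f xstar + h xstar))) * lamLow
        = lamLow * ∑ i ∈ Finset.range N,
          ((f (x (i+1)) + h (x (i+1))) - (f xstar + h xstar)) := by ring
      _ ≤ C1 := by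
          rw [h7] at h2
          rw [hC1def]
          exact h1.trans (h2.trans (add_le_add (add_le_add hSa hSb) hSc))
  -- conclusion via Jensen
  refine ⟨D + C1 / lamLow, fun N => ?_⟩
  have hw0 : (0:ℝ) < (N:ℝ) + 1 := by positivity
  have hwinv : (0:ℝ) ≤ ((N:ℝ) + 1)⁻¹ := by positivity
  have hsumw : ∑ _i ∈ Finset.range (N+1), ((N:ℝ) + 1)⁻¹ = 1 := by
    rw [Finset.sum_const, Finset.card_range, nsmul_eq_mul]
    push_cast
    exact mul_inv_cancel₀ (ne_of_gt hw0)
  have hJ := (hfconv.add hconv).map_sum_le (t := Finset.range (N+1))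
    (w := fun _ => ((N:ℝ) + 1)⁻¹) (p := x)
    (fun i _ => hwinv) hsumw (fun i _ => Set.mem_univ (x i))
  simp only [Pi.add_apply, smul_eq_mul] at hJ
  have hz : ((N:ℝ) + 1)⁻¹ • ∑ i ∈ Finset.range (N+1), x i
      = ∑ i ∈ Finset.range (N+1), ((N:ℝ) + 1)⁻¹ • x i := Finset.smul_sum
  -- bound on the sum of function values
  have hsumF : ∑ i ∈ Finset.range (N+1), (f (x i) + h (x i))
      ≤ (D + C1 / lamLow) + ((N:ℝ) + 1) * (f xstar + h xstar) := by
    have h8 : ∑ i ∈ Finset.range (N+1), ((f (x i) + h (x i)) - (f xstar + h xstar))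
        = (∑ i ∈ Finset.range N, ((f (x (i+1)) + h (x (i+1))) - (f xstar + h xstar)))
          + ((f (x 0) + h (x 0)) - (f xstar + h xstar)) :=
      Finset.sum_range_succ' (fun i => (f (x i) + h (x i)) - (f xstar + h xstar)) N
    have h9 : ∑ i ∈ Finset.range (N+1), ((f (x i) + h (x i)) - (f xstar + h xstar))
        = (∑ i ∈ Finset.range (N+1), (f (x i) + h (x i)))
          - ((N:ℝ) + 1) * (f xstar + h xstar) := by
      rw [Finset.sum_sub_distrib, Finset.sum_const, Finset.card_range, nsmul_eq_mul]
      push_cast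
      ring
    have h10 := hmain N
    rw [h9] at h8
    rw [hDdef] at *
    linarith
  have h11 : ∑ i ∈ Finset.range (N+1), ((N:ℝ) + 1)⁻¹ * (f (x i) + h (x i))
      = ((N:ℝ) + 1)⁻¹ * ∑ i ∈ Finset.range (N+1), (f (x i) + h (x i)) := by
    rw [Finset.mul_sum]
  have h12 := mul_le_mul_of_nonneg_left hsumF hwinv
  have h13 : ((N:ℝ) + 1)⁻¹ * (((N:ℝ) + 1) * (f xstar + h xstar)) = f xstar + h xstar := by
    rw [← mul_assoc, inv_mul_cancel₀ (ne_of_gt hw0), one_mul]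
  rw [hz]
  have hJ2 := hJ
  rw [h11] at hJ2
  have h14 : ((N:ℝ) + 1)⁻¹ * ((D + C1 / lamLow) + ((N:ℝ) + 1) * (f xstar + h xstar))
      = ((N:ℝ) + 1)⁻¹ * (D + C1 / lamLow) + (f xstar + h xstar) := by
    rw [mul_add, h13]
  have h15 : (D + C1 / lamLow) / ((N:ℝ) + 1) = ((N:ℝ) + 1)⁻¹ * (D + C1 / lamLow) := by
    rw [div_eq_inv_mul]
  rw [h15]
  linarith [hJ2, h12, h14 ▸ h12]
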